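/- Let λ = p^{a_j}/(d_j − dᵢ p)^{aᵢ+a_j}. Then for every x ∈ ℝ₊ⁿ with x_j = p xᵢ or x_j = q xᵢ, one has λ (d_j xᵢ − dᵢ x_j)^{aᵢ+a_j} ∏_{k ∉ {i,j}} x_k^{a_k} = ∏_{k=1}^n x_k^{a_k}. -/

import Mathlib

open Real Finset

/-- `f′_ℓ` matches `f` on the rays `x_j = p xᵢ` and `x_j = q xᵢ`. -/
theorem lower_minorant_matches_on_rays (n : ℕ) (hn : 2 ≤ n) (a : Fin n → ℝ)
    (ha : ∀ k, 0 < a k) (i j : Fin n) (hij : i ≠ j)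
    (p q : ℝ) (hp : 0 < p) (hpq : p < q)
    (di dj lam : ℝ)
    (hdi : di = q ^ (-(a j / (a i + a j))) - p ^ (-(a j / (a i + a j))))
    (hdj : dj = q ^ (a i / (a i + a j)) - p ^ (a i / (a i + a j)))
    (hlam : lam = p ^ a j / (dj - di * p) ^ (a i + a j)) :
    ∀ x : Fin n → ℝ, (∀ k, 0 ≤ x k) → (x j = p * x i ∨ x j = q * x i) →
      lam * (dj * x i - di * x j) ^ (a i + a j) *
          ∏ k ∈ ({i, j} : Finset (Fin n))ᶜ, x k ^ a k =
        ∏ k, x k ^ a k := by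
  have hq : 0 < q := hp.trans hpq
  have hs : 0 < a i + a j := add_pos (ha i) (ha j)
  have hsne : a i + a j ≠ 0 := hs.ne'
  have hqp : 0 < q - p := sub_pos.2 hpq
  have hsplit : a i / (a i + a j) = 1 + (-(a j / (a i + a j))) := by
    field_simp
    ring
  have hdp : dj - di * p = q ^ (-(a j / (a i + a j))) * (q - p) := by
    rw [hdi, hdj, hsplit, rpow_add hp, rpow_add hq, rpow_one, rpow_one]
    ring
  have hdq : dj - di * q = p ^ (-(a j / (a i + a j))) * (q - p) := by
    rw [hdi, hdj, hsplit, rpow_add hp, rpow_add hq, rpow_one, rpow_one]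
    ring
  have hdppos : 0 < dj - di * p := by
    rw [hdp]; exact mul_pos (rpow_pos_of_pos hq _) hqp
  have hdqpos : 0 < dj - di * q := by
    rw [hdq]; exact mul_pos (rpow_pos_of_pos hp _) hqp
  have hpow : ∀ c : ℝ, 0 < c →
      (c ^ (-(a j / (a i + a j))) * (q - p)) ^ (a i + a j)
        = c ^ (-(a j)) * (q - p) ^ (a i + a j) := by
    intro c hc
    rw [mul_rpow (rpow_nonneg hc.le _) hqp.le, ← rpow_mul hc.le]
    congr 2
    field_simp
  have hlamp : lam * (dj - di * p) ^ (a i + a j) = p ^ a j := by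
    rw [hlam]
    exact div_mul_cancel₀ _ (rpow_pos_of_pos hdppos _).ne'
  have hlamq : lam * (dj - di * q) ^ (a i + a j) = q ^ a j := by
    rw [hlam, hdp, hdq, hpow q hq, hpow p hp, rpow_neg hp.le, rpow_neg hq.le]
    have h1 : (0:ℝ) < p ^ a j := rpow_pos_of_pos hp _
    have h2 : (0:ℝ) < q ^ a j := rpow_pos_of_pos hq _
    have h3 : (0:ℝ) < (q - p) ^ (a i + a j) := rpow_pos_of_pos hqp _
    field_simp
  intro x hx hxc
  have main : ∀ c : ℝ, 0 < c → 0 < dj - di * c →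
      lam * (dj - di * c) ^ (a i + a j) = c ^ a j → x j = c * x i →
      lam * (dj * x i - di * x j) ^ (a i + a j) *
          ∏ k ∈ ({i, j} : Finset (Fin n))ᶜ, x k ^ a k =
        ∏ k, x k ^ a k := by
    intro c hc hdc hl hxj
    have key : dj * x i - di * x j = (dj - di * c) * x i := by rw [hxj]; ring
    rw [key, mul_rpow hdc.le (hx i)]
    rcases eq_or_lt_of_le (hx i) with h0 | h0
    · have hz : (∏ k, x k ^ a k) = 0 :=
        Finset.prod_eq_zero (Finset.mem_univ i)
          (by rw [← h0, zero_rpow (ha i).ne'])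
      rw [hz, ← h0, zero_rpow hsne]
      ring
    · have hrhs : (∏ k, x k ^ a k) =
          (x i ^ a i * x j ^ a j) * ∏ k ∈ ({i, j} : Finset (Fin n))ᶜ, x k ^ a k := by
        rw [← Finset.prod_mul_prod_compl ({i, j} : Finset (Fin n)) (fun k => x k ^ a k),
          Finset.prod_pair hij]
      rw [hrhs, hxj, mul_rpow hc.le h0.le, rpow_add h0]
      linear_combination (x i ^ a i * x i ^ a j *
        ∏ k ∈ ({i, j} : Finset (Fin n))ᶜ, x k ^ a k) * hl
  rcases hxc with hxj | hxj
  · exact main p hp hdppos hlamp hxj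
  · exact main q hq hdqpos hlamq hxj
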